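/- Let 𝔎₁, 𝔎₂ be closed subspaces of a Hilbert space and 𝔏 ⊆ 𝔎₁ ∩ 𝔎₂ a closed subspace. Then the condition ⟨u, v⟩ = ⟨P_𝔏 u, P_𝔏 v⟩ for all u ∈ 𝔎₁, v ∈ 𝔎₂ is equivalent to: P_{𝔎₂} u = P_𝔏 u for all u ∈ 𝔎₁. -/

import Mathlib

open scoped InnerProductSpace

/-- For closed subspaces `K₁`, `K₂` of a Hilbert space and a closed subspace `L ⊆ K₁ ∩ K₂`,
relative orthogonality of `K₁` and `K₂` over `L` (i.e. `⟪u,v⟫ = ⟪P_L u, P_L v⟫` for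
`u ∈ K₁`, `v ∈ K₂`) is equivalent to `P_{K₂} u = P_L u` for all `u ∈ K₁`. -/
theorem relatively_orthogonal_iff_proj_eq {H : Type} [NormedAddCommGroup H]
    [InnerProductSpace ℝ H] [CompleteSpace H]
    (K₁ K₂ L : Submodule ℝ H) [CompleteSpace K₁] [CompleteSpace K₂] [CompleteSpace L]
    (hL : L ≤ K₁ ⊓ K₂) :
    (∀ u ∈ K₁, ∀ v ∈ K₂,
      ⟪u, v⟫_ℝ = ⟪(Submodule.orthogonalProjectionOnto L u : H), (Submodule.orthogonalProjectionOnto L v : H)⟫_ℝ) ↔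
    (∀ u ∈ K₁, (Submodule.orthogonalProjectionOnto K₂ u : H) = (Submodule.orthogonalProjectionOnto L u : H)) := by
  have hPLinner : ∀ (x v : H), ⟪(Submodule.orthogonalProjectionOnto L x : H), v⟫_ℝ
      = ⟪(Submodule.orthogonalProjectionOnto L x : H), (Submodule.orthogonalProjectionOnto L v : H)⟫_ℝ := by
    intro x v
    have h : ⟪v - (Submodule.orthogonalProjectionOnto L v : H), (Submodule.orthogonalProjectionOnto L x : H)⟫_ℝ = 0 :=
      Submodule.starProjection_inner_eq_zero v (Submodule.orthogonalProjectionOnto L x : H)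
      (Submodule.orthogonalProjectionOnto L x).2
    rw [inner_sub_left] at h
    rw [real_inner_comm v (Submodule.orthogonalProjectionOnto L x : H),
      real_inner_comm (Submodule.orthogonalProjectionOnto L v : H) (Submodule.orthogonalProjectionOnto L x : H)]
    exact sub_eq_zero.mp h
  constructor
  · intro h u hu
    refine Submodule.eq_starProjection_of_mem_of_inner_eq_zero
      (hL (Submodule.orthogonalProjectionOnto L u).2).2 fun w hw => ?_
    rw [inner_sub_left, h u hu w hw, hPLinner u w]
    ring
  · intro h u hu v hv
    have h2 : ⟪u - (Submodule.orthogonalProjectionOnto K₂ u : H), v⟫_ℝ = 0 :=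
      Submodule.starProjection_inner_eq_zero u v hv
    rw [inner_sub_left, h u hu] at h2
    have h3 := hPLinner u v
    linarith
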